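/- Let Q be a real symmetric positive definite p × p matrix, let P : ℝ^p → ℝ be convex, nonnegative, and positively homogeneous of degree one, let λ ≥ 0 and a ∈ ℝ^p. Then the zero vector is a global minimizer over ℝ^p of g(v) = (1/2)(a − v)ᵀQ(a − v) + λ P(v) if and only if vᵀQ a ≤ λ P(v) for every v ∈ ℝ^p; and in that case v* = 0 is a global maximizer of f(v) = vᵀQ a − λ P(v) over {v : vᵀQ v ≤ 1}. -/

import Mathlib

open Matrix

/-- degenerate (zero-solution) case of the v-coordinate update
in Proposition 2 part 2 (Generalized RPLS). For symmetric positive definite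
`Q`, the zero vector globally minimizes `(1/2)(a − v)ᵀQ(a − v) + λP(v)` if and
only if `vᵀQa ≤ λP(v)` for all `v`; and in that case `v* = 0` globally
maximizes `vᵀQa − λP(v)` over `{v : vᵀQv ≤ 1}`. -/
theorem grpls_v_update_zero {p : ℕ} (Q : Matrix (Fin p) (Fin p) ℝ)
    (hQ : Q.PosDef) (P : (Fin p → ℝ) → ℝ)
    (hconv : ConvexOn ℝ Set.univ P) (hnonneg : ∀ v, 0 ≤ P v)
    (hhom : ∀ c : ℝ, 0 ≤ c → ∀ v, P (c • v) = c * P v)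
    (lam : ℝ) (hlam : 0 ≤ lam) (a : Fin p → ℝ) :
    ((∀ v : Fin p → ℝ,
        (1 / 2) * ((a - 0) ⬝ᵥ (Q *ᵥ (a - 0))) + lam * P 0 ≤
          (1 / 2) * ((a - v) ⬝ᵥ (Q *ᵥ (a - v))) + lam * P v) ↔
      (∀ v : Fin p → ℝ, v ⬝ᵥ (Q *ᵥ a) ≤ lam * P v)) ∧
    ((∀ v : Fin p → ℝ,
        (1 / 2) * ((a - 0) ⬝ᵥ (Q *ᵥ (a - 0))) + lam * P 0 ≤
          (1 / 2) * ((a - v) ⬝ᵥ (Q *ᵥ (a - v))) + lam * P v) →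
      ∀ v : Fin p → ℝ, v ⬝ᵥ (Q *ᵥ v) ≤ 1 →
        v ⬝ᵥ (Q *ᵥ a) - lam * P v ≤ 0) := by
  have hP0 : P 0 = 0 := by
    have := hhom 0 le_rfl 0
    simpa using this
  have hsym : ∀ v w : Fin p → ℝ, v ⬝ᵥ (Q *ᵥ w) = w ⬝ᵥ (Q *ᵥ v) := by
    intro v w
    have h : Qᵀ = Q := by
      have := hQ.isHermitian
      simpa [Matrix.IsHermitian, Matrix.conjTranspose_eq_transpose_of_trivial] using this
    rw [Matrix.dotProduct_mulVec]
    nth_rewrite 1 [← h]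
    rw [Matrix.vecMul_transpose, dotProduct_comm]
  have hexp : ∀ v : Fin p → ℝ,
      (a - v) ⬝ᵥ (Q *ᵥ (a - v))
        = a ⬝ᵥ (Q *ᵥ a) - 2 * (v ⬝ᵥ (Q *ᵥ a)) + v ⬝ᵥ (Q *ᵥ v) := by
    intro v
    have := hsym a v
    simp only [Matrix.mulVec_sub, sub_dotProduct, dotProduct_sub]
    linarith
  have hnn : ∀ v : Fin p → ℝ, 0 ≤ v ⬝ᵥ (Q *ᵥ v) := by
    intro v
    rcases eq_or_ne v 0 with h | h
    · simp [h]
    · exact le_of_lt (hQ.dotProduct_mulVec_pos h)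
  have hiff : (∀ v : Fin p → ℝ,
        (1 / 2) * ((a - 0) ⬝ᵥ (Q *ᵥ (a - 0))) + lam * P 0 ≤
          (1 / 2) * ((a - v) ⬝ᵥ (Q *ᵥ (a - v))) + lam * P v) ↔
      (∀ v : Fin p → ℝ, v ⬝ᵥ (Q *ᵥ a) ≤ lam * P v) := by
    constructor
    · intro h v
      by_contra hc
      push_neg at hc
      set c : ℝ := v ⬝ᵥ (Q *ᵥ a) - lam * P v with hcdef
      have hcpos : 0 < c := by linarith
      have key : ∀ t : ℝ, 0 < t → t ≤ 1 → t * c ≤ (t ^ 2 / 2) * (v ⬝ᵥ (Q *ᵥ v)) := by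
        intro t ht ht1
        have := h (t • v)
        rw [hexp (t • v), hexp 0] at this
        have hsmul1 : (t • v) ⬝ᵥ (Q *ᵥ a) = t * (v ⬝ᵥ (Q *ᵥ a)) := by
          simp [smul_dotProduct]
        have hsmul2 : (t • v) ⬝ᵥ (Q *ᵥ (t • v)) = t ^ 2 * (v ⬝ᵥ (Q *ᵥ v)) := by
          simp [smul_dotProduct, Matrix.mulVec_smul, dotProduct_smul]
          ring
        have hPt : P (t • v) = t * P v := hhom t ht.le v
        rw [hsmul1, hsmul2, hPt, hP0] at this
        simp only [zero_dotProduct, dotProduct_zero, Matrix.mulVec_zero,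
          mul_zero] at this
        simp only [hcdef]
        nlinarith
      rcases eq_or_lt_of_le (hnn v) with hq | hq
      · have := key 1 one_pos le_rfl
        rw [← hq] at this
        nlinarith
      · set K := v ⬝ᵥ (Q *ᵥ v) with hK
        set t : ℝ := min 1 (c / K) with htdef
        have ht0 : 0 < t := lt_min one_pos (div_pos hcpos hq)
        have := key t ht0 (min_le_left _ _)
        have htK : t * K ≤ c := by
          calc t * K ≤ (c / K) * K := by
                apply mul_le_mul_of_nonneg_right (min_le_right _ _) hq.le
            _ = c := by field_simp
        nlinarith
    · intro h v
      rw [hexp v, hexp 0]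
      have h1 := h v
      have h2 := hnn v
      simp only [zero_dotProduct, dotProduct_zero, Matrix.mulVec_zero, hP0]
      nlinarith
  refine ⟨hiff, ?_⟩
  intro h v _
  have := (hiff.mp h) v
  linarith
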